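/- There exist constants 0 < c₁ ≤ c₂ depending only on c and θ such that for every x ≥ 2 and every real t with g(Δ₁) ≤ t and t + 1 ≤ g(Δ₂), one has c₁·t^{γ−1} ≤ m(t+1) − m(t) ≤ c₂·t^{γ−1}. -/

import Mathlib

open Real

/-- `Δ₁ = exp(π·⌊(log x)/π⌋ + arctan 1)` -/
noncomputable def Δ₁ (x : ℝ) : ℝ :=
  Real.exp (Real.pi * (⌊Real.log x / Real.pi⌋ : ℝ) + Real.arctan 1)

/-- `Δ₂ = exp(π·⌊(log x)/π⌋ + arctan 2)` -/
noncomputable def Δ₂ (x : ℝ) : ℝ :=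
  Real.exp (Real.pi * (⌊Real.log x / Real.pi⌋ : ℝ) + Real.arctan 2)

/-- `g(y) = y^c · (tan(log y))^θ` (real powers). -/
noncomputable def g (c θ y : ℝ) : ℝ := y ^ c * Real.tan (Real.log y) ^ θ

open Set in
lemma tan_facts {x y : ℝ} (hy : y ∈ Set.Icc (Δ₁ x) (Δ₂ x)) :
    0 < y ∧ 1 ≤ Real.tan (Real.log y) ∧ Real.tan (Real.log y) ≤ 2 ∧
      Real.cos (Real.log y) ≠ 0 := by
  obtain ⟨h1, h2⟩ := hy
  have hy0 : 0 < y := lt_of_lt_of_le (Real.exp_pos _) h1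
  set k : ℤ := ⌊Real.log x / Real.pi⌋ with hk
  have hl1 : Real.pi * (k : ℝ) + Real.arctan 1 ≤ Real.log y :=
    (Real.le_log_iff_exp_le hy0).mpr h1
  have hl2 : Real.log y ≤ Real.pi * (k : ℝ) + Real.arctan 2 :=
    (Real.log_le_iff_le_exp hy0).mpr h2
  set s : ℝ := Real.log y - (k : ℝ) * Real.pi with hs
  have hts : Real.tan (Real.log y) = Real.tan s :=
    (Real.tan_periodic.sub_int_mul_eq k).symm
  have hs1 : Real.arctan 1 ≤ s := by simp only [hs]; linarith
  have hs2 : s ≤ Real.arctan 2 := by simp only [hs]; linarith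
  have hsl : -(Real.pi / 2) < s :=
    lt_of_lt_of_le (Real.neg_pi_div_two_lt_arctan 1) hs1
  have hsr : s < Real.pi / 2 := lt_of_le_of_lt hs2 (Real.arctan_lt_pi_div_two 2)
  have hat : Real.arctan (Real.tan s) = s := Real.arctan_tan hsl hsr
  have h1t : 1 ≤ Real.tan s := by
    by_contra h
    push_neg at h
    have := Real.arctan_strictMono h
    rw [hat, Real.arctan_one] at this
    have := Real.arctan_one ▸ hs1
    linarith
  have h2t : Real.tan s ≤ 2 := by
    by_contra h
    push_neg at h
    have := Real.arctan_strictMono h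
    rw [hat] at this
    linarith
  refine ⟨hy0, by rw [hts]; exact h1t, by rw [hts]; exact h2t, ?_⟩
  intro hcos
  have : Real.tan (Real.log y) = 0 := by
    rw [Real.tan_eq_sin_div_cos, hcos, div_zero]
  rw [hts] at this
  linarith

/-- the derivative of `g` on the good interval -/
lemma g_hasDerivAt (c θ : ℝ) (hθ : 1 ≤ θ) {x y : ℝ}
    (hy : y ∈ Set.Icc (Δ₁ x) (Δ₂ x)) :
    HasDerivAt (g c θ)
      (y ^ (c - 1) * (c * Real.tan (Real.log y) ^ θ +
        θ * Real.tan (Real.log y) ^ (θ - 1) * (1 + Real.tan (Real.log y) ^ 2))) y := by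
  obtain ⟨hy0, hT1, hT2, hcos⟩ := tan_facts hy
  set T := Real.tan (Real.log y) with hT
  have h1 : HasDerivAt (fun z : ℝ => z ^ c) (c * y ^ (c - 1)) y :=
    Real.hasDerivAt_rpow_const (Or.inl hy0.ne')
  have hlog : HasDerivAt Real.log y⁻¹ y := Real.hasDerivAt_log hy0.ne'
  have htan : HasDerivAt Real.tan (1 / Real.cos (Real.log y) ^ 2) (Real.log y) :=
    Real.hasDerivAt_tan hcos
  have h2 : HasDerivAt (fun z : ℝ => Real.tan (Real.log z))
      (1 / Real.cos (Real.log y) ^ 2 * y⁻¹) y := htan.comp y hlog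
  have h3 : HasDerivAt (fun w : ℝ => w ^ θ) (θ * T ^ (θ - 1)) T :=
    Real.hasDerivAt_rpow_const (Or.inr hθ)
  have h4 : HasDerivAt (fun z : ℝ => Real.tan (Real.log z) ^ θ)
      (θ * T ^ (θ - 1) * (1 / Real.cos (Real.log y) ^ 2 * y⁻¹)) y := by
    have := h3.comp y h2; exact this
  have h5 := h1.mul h4
  have hsq : 1 / Real.cos (Real.log y) ^ 2 = 1 + T ^ 2 := by
    rw [← Real.inv_one_add_tan_sq hcos, one_div, inv_inv, hT]
  have hpow : y ^ c * y⁻¹ = y ^ (c - 1) := by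
    rw [Real.rpow_sub hy0, Real.rpow_one, div_eq_mul_inv]
  have hval : c * y ^ (c - 1) * T ^ θ +
      y ^ c * (θ * T ^ (θ - 1) * (1 / Real.cos (Real.log y) ^ 2 * y⁻¹))
      = y ^ (c - 1) * (c * T ^ θ + θ * T ^ (θ - 1) * (1 + T ^ 2)) := by
    rw [hsq]
    linear_combination (θ * T ^ (θ - 1) * (1 + T ^ 2)) * hpow
  unfold g
  rw [← hval]
  exact h5

lemma bracket_bounds {c θ T : ℝ} (hc : 1 < c) (hθ : 1 < θ) (hT1 : 1 ≤ T) (hT2 : T ≤ 2) :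
    c + 2 * θ ≤ c * T ^ θ + θ * T ^ (θ - 1) * (1 + T ^ 2) ∧
      c * T ^ θ + θ * T ^ (θ - 1) * (1 + T ^ 2) ≤ (2 : ℝ) ^ θ * (c + 5 * θ) := by
  have hT0 : (0 : ℝ) ≤ T := by linarith
  have h1 : 1 ≤ T ^ θ := Real.one_le_rpow hT1 (by linarith)
  have h2 : T ^ θ ≤ 2 ^ θ := Real.rpow_le_rpow hT0 hT2 (by linarith)
  have h3 : 1 ≤ T ^ (θ - 1) := Real.one_le_rpow hT1 (by linarith)
  have h4 : T ^ (θ - 1) ≤ 2 ^ (θ - 1) := Real.rpow_le_rpow hT0 hT2 (by linarith)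
  have h5 : (2 : ℝ) ^ (θ - 1) ≤ 2 ^ θ :=
    Real.rpow_le_rpow_of_exponent_le one_le_two (by linarith)
  have h6 : (1 : ℝ) ≤ 2 ^ θ := Real.one_le_rpow one_le_two (by linarith)
  have hsq1 : (2 : ℝ) ≤ 1 + T ^ 2 := by nlinarith
  have hsq2 : 1 + T ^ 2 ≤ 5 := by nlinarith
  constructor
  · nlinarith [mul_le_mul h3 hsq1 (by norm_num) (le_trans zero_le_one h3)]
  · have hA : c * T ^ θ ≤ c * 2 ^ θ := by nlinarith
    have hB : T ^ (θ - 1) * (1 + T ^ 2) ≤ 2 ^ θ * 5 := by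
      have := mul_le_mul (le_trans h4 h5) hsq2 (by positivity) (by positivity)
      linarith
    nlinarith [hB, mul_le_mul_of_nonneg_left hB (le_of_lt (lt_trans one_pos hθ))]

set_option maxHeartbeats 1000000 in
theorem stmt_7 (c θ : ℝ) (hc₁ : 1 < c) (hc₂ : c < 12 / 11) (hθ : 1 < θ)
    (m : ℝ → ℝ → ℝ)
    (hm : ∀ x : ℝ, 2 ≤ x → ∀ t ∈ Set.Icc (g c θ (Δ₁ x)) (g c θ (Δ₂ x)),
      m x t ∈ Set.Icc (Δ₁ x) (Δ₂ x) ∧ g c θ (m x t) = t) :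
    ∃ c₁ c₂ : ℝ, 0 < c₁ ∧ c₁ ≤ c₂ ∧
      ∀ x : ℝ, 2 ≤ x → ∀ t : ℝ, g c θ (Δ₁ x) ≤ t → t + 1 ≤ g c θ (Δ₂ x) →
        c₁ * t ^ (1 / c - 1) ≤ m x (t + 1) - m x t ∧
          m x (t + 1) - m x t ≤ c₂ * t ^ (1 / c - 1) := by
  have hc0 : (0 : ℝ) < c := by linarith
  have hθ0 : (0 : ℝ) < θ := by linarith
  set α : ℝ := 1 / c with hα
  have hα0 : 0 < α := by positivity
  have hα1 : α < 1 := by rw [hα, div_lt_one hc0]; exact hc₁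
  set A : ℝ := c + 2 * θ with hA
  set B : ℝ := (2 : ℝ) ^ θ * (c + 5 * θ) with hB
  have hA0 : 0 < A := by positivity
  have hB0 : 0 < B := by positivity
  have hE1 : (1 : ℝ) ≤ Real.exp (c - 1) := Real.one_le_exp (by linarith)
  have h2α : (1 : ℝ) ≤ (2 : ℝ) ^ (θ * (1 - α)) :=
    Real.one_le_rpow one_le_two (by nlinarith)
  have hAB : A ≤ B := by
    have h6 : (1 : ℝ) ≤ (2 : ℝ) ^ θ := Real.one_le_rpow one_le_two (by linarith)
    rw [hA, hB]; nlinarith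
  refine ⟨1 / (B * Real.exp (c - 1)), (2 : ℝ) ^ (θ * (1 - α)) / A, by positivity, ?_, ?_⟩
  · have h1 : 1 / (B * Real.exp (c - 1)) ≤ 1 / A := by
      apply one_div_le_one_div_of_le hA0; nlinarith
    have h2 : 1 / A ≤ (2 : ℝ) ^ (θ * (1 - α)) / A := by gcongr
    linarith
  · intro x hx t ht1 ht2
    -- basic memberships
    have htmem : t ∈ Set.Icc (g c θ (Δ₁ x)) (g c θ (Δ₂ x)) := ⟨ht1, by linarith⟩
    have ht1mem : t + 1 ∈ Set.Icc (g c θ (Δ₁ x)) (g c θ (Δ₂ x)) := ⟨by linarith, ht2⟩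
    obtain ⟨hy1mem, hgy1⟩ := hm x hx t htmem
    obtain ⟨hy2mem, hgy2⟩ := hm x hx (t + 1) ht1mem
    set y₁ := m x t with hy₁
    set y₂ := m x (t + 1) with hy₂
    obtain ⟨hy10, hT11, hT12, -⟩ := tan_facts hy1mem
    obtain ⟨hy20, hT21, hT22, -⟩ := tan_facts hy2mem
    -- t is positive
    have hΔle : Δ₁ x ≤ Δ₂ x := by
      apply Real.exp_le_exp.mpr
      have := Real.arctan_strictMono (show (1:ℝ) < 2 by norm_num)
      linarith
    have hd1mem : Δ₁ x ∈ Set.Icc (Δ₁ x) (Δ₂ x) := ⟨le_refl _, hΔle⟩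
    obtain ⟨hΔ0, hTd1, -, -⟩ := tan_facts hd1mem
    have hgΔpos : 0 < g c θ (Δ₁ x) := by
      unfold g
      have h1 : 0 < (Δ₁ x) ^ c := Real.rpow_pos_of_pos hΔ0 c
      have h2 : 0 < Real.tan (Real.log (Δ₁ x)) ^ θ :=
        Real.rpow_pos_of_pos (by linarith) θ
      positivity
    have ht0 : 0 < t := lt_of_lt_of_le hgΔpos ht1
    -- the derivative function
    set D : ℝ → ℝ := fun y => y ^ (c - 1) * (c * Real.tan (Real.log y) ^ θ +
        θ * Real.tan (Real.log y) ^ (θ - 1) * (1 + Real.tan (Real.log y) ^ 2)) with hD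
    have hDbound : ∀ y ∈ Set.Icc (Δ₁ x) (Δ₂ x),
        A * y ^ (c - 1) ≤ D y ∧ D y ≤ B * y ^ (c - 1) := by
      intro y hy
      obtain ⟨hy0, h1, h2, -⟩ := tan_facts hy
      obtain ⟨hb1, hb2⟩ := bracket_bounds hc₁ hθ h1 h2
      have hyp : 0 < y ^ (c - 1) := Real.rpow_pos_of_pos hy0 _
      constructor
      · rw [hD]; simp only
        rw [mul_comm A _]
        exact mul_le_mul_of_nonneg_left hb1 hyp.le
      · rw [hD]; simp only
        rw [mul_comm B _]
        exact mul_le_mul_of_nonneg_left hb2 hyp.le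
    have hDpos : ∀ y ∈ Set.Icc (Δ₁ x) (Δ₂ x), 0 < D y := by
      intro y hy
      obtain ⟨hy0, -, -, -⟩ := tan_facts hy
      have hAy : 0 < A * y ^ (c - 1) := by positivity
      exact lt_of_lt_of_le hAy (hDbound y hy).1
    -- mean value theorem helper
    have hmvt : ∀ a b : ℝ, a ∈ Set.Icc (Δ₁ x) (Δ₂ x) → b ∈ Set.Icc (Δ₁ x) (Δ₂ x) →
        a < b → ∃ ξ ∈ Set.Ioo a b, D ξ = (g c θ b - g c θ a) / (b - a) := by
      intro a b ha hb hab
      have hsub : Set.Icc a b ⊆ Set.Icc (Δ₁ x) (Δ₂ x) :=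
        Set.Icc_subset_Icc ha.1 hb.2
      have hcont : ContinuousOn (g c θ) (Set.Icc a b) := fun z hz =>
        ((g_hasDerivAt c θ hθ.le (hsub hz)).continuousAt).continuousWithinAt
      have hderiv : ∀ z ∈ Set.Ioo a b, HasDerivAt (g c θ) (D z) z := fun z hz =>
        g_hasDerivAt c θ hθ.le (hsub (Set.mem_Icc_of_Ioo hz))
      exact exists_hasDerivAt_eq_slope (g c θ) D hab hcont hderiv
    -- y₁ < y₂
    have hlt : y₁ < y₂ := by
      rcases lt_trichotomy y₁ y₂ with h | h | h
      · exact h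
      · exfalso; rw [h, hgy2] at hgy1; linarith
      · exfalso
        obtain ⟨ξ, hξ, hslope⟩ := hmvt y₂ y₁ hy2mem hy1mem h
        have hξmem : ξ ∈ Set.Icc (Δ₁ x) (Δ₂ x) :=
          ⟨le_trans hy2mem.1 hξ.1.le, le_trans hξ.2.le hy1mem.2⟩
        have hpos := hDpos ξ hξmem
        rw [hgy1, hgy2] at hslope
        have hden : 0 < y₁ - y₂ := by linarith
        have : D ξ < 0 := by
          rw [hslope]
          apply div_neg_of_neg_of_pos (by linarith) hden
        linarith
    obtain ⟨ξ, hξ, hslope⟩ := hmvt y₁ y₂ hy1mem hy2mem hlt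
    have hξmem : ξ ∈ Set.Icc (Δ₁ x) (Δ₂ x) :=
      ⟨le_trans hy1mem.1 hξ.1.le, le_trans hξ.2.le hy2mem.2⟩
    rw [hgy1, hgy2] at hslope
    have hdenpos : 0 < y₂ - y₁ := by linarith
    have hslope' : D ξ = 1 / (y₂ - y₁) := by rw [hslope]; ring_nf
    have hDξpos := hDpos ξ hξmem
    have hdiff : y₂ - y₁ = 1 / D ξ := by
      rw [hslope']; rw [one_div_one_div]
    obtain ⟨hDlo, hDhi⟩ := hDbound ξ hξmem
    -- bounds on ξ in terms of t
    have hξ0 : 0 < ξ := lt_trans hy10 hξ.1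
    have h2θpos : (0:ℝ) < (2:ℝ) ^ θ := Real.rpow_pos_of_pos two_pos θ
    have hTθ1 : 1 ≤ Real.tan (Real.log y₁) ^ θ := Real.one_le_rpow hT11 hθ0.le
    have hTθ2 : Real.tan (Real.log y₁) ^ θ ≤ 2 ^ θ :=
      Real.rpow_le_rpow (by linarith) hT12 hθ0.le
    have hy1c : 0 < y₁ ^ c := Real.rpow_pos_of_pos hy10 c
    have hglow : y₁ ^ c ≤ t := by
      rw [← hgy1]; unfold g
      exact le_mul_of_one_le_right hy1c.le hTθ1
    have hghigh : t ≤ y₁ ^ c * 2 ^ θ := by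
      rw [← hgy1]; unfold g
      exact mul_le_mul_of_nonneg_left hTθ2 hy1c.le
    -- y₁ ≤ t^α
    have hy1cα : (y₁ ^ c) ^ α = y₁ := by
      rw [← Real.rpow_mul hy10.le, hα, mul_one_div, div_self hc0.ne', Real.rpow_one]
    have hy1hi : y₁ ≤ t ^ α := by
      rw [← hy1cα]
      exact Real.rpow_le_rpow (le_of_lt hy1c) hglow hα0.le
    have hy1lo : (t / 2 ^ θ) ^ α ≤ y₁ := by
      rw [← hy1cα]
      apply Real.rpow_le_rpow (by positivity) _ hα0.le
      rw [div_le_iff₀ h2θpos]; linarith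
    -- upper bound on ξ : ξ ≤ exp 1 * t ^ α
    have hΔratio : Δ₂ x = Δ₁ x * Real.exp (Real.arctan 2 - Real.arctan 1) := by
      unfold Δ₁ Δ₂; rw [← Real.exp_add]; ring_nf
    have harcdiff : Real.arctan 2 - Real.arctan 1 ≤ 1 := by
      have h1 := Real.arctan_lt_pi_div_two 2
      have h2 : Real.arctan 1 = Real.pi / 4 := Real.arctan_one
      have h3 : Real.pi ≤ 4 := Real.pi_le_four
      linarith
    have hξhi : ξ ≤ Real.exp 1 * t ^ α := by
      have h1 : ξ ≤ Δ₂ x := le_trans hξ.2.le hy2mem.2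
      have h2 : Δ₁ x ≤ y₁ := hy1mem.1
      have h3 : Real.exp (Real.arctan 2 - Real.arctan 1) ≤ Real.exp 1 :=
        Real.exp_le_exp.mpr harcdiff
      have h4 : Δ₂ x ≤ y₁ * Real.exp 1 := by
        rw [hΔratio]
        exact mul_le_mul h2 h3 (Real.exp_pos _).le hy10.le
      calc ξ ≤ y₁ * Real.exp 1 := le_trans h1 h4
        _ ≤ t ^ α * Real.exp 1 :=
            mul_le_mul_of_nonneg_right hy1hi (Real.exp_pos 1).le
        _ = Real.exp 1 * t ^ α := by ring
    have hξlo : (t / 2 ^ θ) ^ α ≤ ξ := le_trans hy1lo hξ.1.le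
    -- rpow manipulations
    have hc1 : (0:ℝ) ≤ c - 1 := by linarith
    have hexp_eq : α * (c - 1) = 1 - α := by rw [hα]; field_simp
    have hkey_hi : ξ ^ (c - 1) ≤ Real.exp (c - 1) * t ^ (1 - α) := by
      calc ξ ^ (c - 1) ≤ (Real.exp 1 * t ^ α) ^ (c - 1) :=
            Real.rpow_le_rpow hξ0.le hξhi hc1
        _ = Real.exp 1 ^ (c - 1) * (t ^ α) ^ (c - 1) :=
            Real.mul_rpow (Real.exp_pos 1).le (by positivity)
        _ = Real.exp (c - 1) * t ^ (1 - α) := by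
            rw [Real.exp_one_rpow, ← Real.rpow_mul ht0.le, hexp_eq]
    have hkey_lo : ((2:ℝ) ^ (θ * (1 - α)))⁻¹ * t ^ (1 - α) ≤ ξ ^ (c - 1) := by
      have h1 : ((t / 2 ^ θ) ^ α) ^ (c - 1) ≤ ξ ^ (c - 1) :=
        Real.rpow_le_rpow (by positivity) hξlo hc1
      have h2 : ((t / 2 ^ θ) ^ α) ^ (c - 1) = (t / 2 ^ θ) ^ (1 - α) := by
        rw [← Real.rpow_mul (by positivity), hexp_eq]
      have h3 : (t / 2 ^ θ) ^ (1 - α) = t ^ (1 - α) / ((2:ℝ) ^ θ) ^ (1 - α) :=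
        Real.div_rpow ht0.le h2θpos.le _
      have h4 : ((2:ℝ) ^ θ) ^ (1 - α) = (2:ℝ) ^ (θ * (1 - α)) := by
        rw [← Real.rpow_mul two_pos.le]
      calc ((2:ℝ) ^ (θ * (1 - α)))⁻¹ * t ^ (1 - α)
          = t ^ (1 - α) / ((2:ℝ) ^ θ) ^ (1 - α) := by rw [h4]; ring
        _ = ((t / 2 ^ θ) ^ α) ^ (c - 1) := by rw [h2, h3]
        _ ≤ ξ ^ (c - 1) := h1
    have ht1α : (0:ℝ) < t ^ (1 - α) := Real.rpow_pos_of_pos ht0 _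
    have htinv : t ^ (α - 1) = (t ^ (1 - α))⁻¹ := by
      rw [show α - 1 = -(1 - α) by ring, Real.rpow_neg ht0.le]
    have h2β : (0:ℝ) < (2:ℝ) ^ (θ * (1 - α)) := Real.rpow_pos_of_pos two_pos _
    -- final bounds
    have hDhi' : D ξ ≤ B * Real.exp (c - 1) * t ^ (1 - α) := by
      calc D ξ ≤ B * ξ ^ (c - 1) := hDhi
        _ ≤ B * (Real.exp (c - 1) * t ^ (1 - α)) :=
            mul_le_mul_of_nonneg_left hkey_hi hB0.le
        _ = B * Real.exp (c - 1) * t ^ (1 - α) := by ring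
    have hDlo' : A * ((2:ℝ) ^ (θ * (1 - α)))⁻¹ * t ^ (1 - α) ≤ D ξ := by
      calc A * ((2:ℝ) ^ (θ * (1 - α)))⁻¹ * t ^ (1 - α)
          = A * (((2:ℝ) ^ (θ * (1 - α)))⁻¹ * t ^ (1 - α)) := by ring
        _ ≤ A * ξ ^ (c - 1) := mul_le_mul_of_nonneg_left hkey_lo hA0.le
        _ ≤ D ξ := hDlo
    have hgoal : (1:ℝ) / c - 1 = α - 1 := by rw [hα]
    rw [hgoal, hdiff, htinv]
    constructor
    · -- lower bound
      rw [div_eq_mul_inv, one_mul]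
      have h1 : D ξ ≤ B * Real.exp (c - 1) * t ^ (1 - α) := hDhi'
      have hBE : (0:ℝ) < B * Real.exp (c - 1) := by positivity
      rw [one_div, mul_comm]
      rw [← mul_inv]
      apply inv_anti₀ hDξpos
      calc D ξ ≤ B * Real.exp (c - 1) * t ^ (1 - α) := hDhi'
        _ = t ^ (1 - α) * (B * Real.exp (c - 1)) := by ring
    · -- upper bound
      have hlo2 : 0 < A * ((2:ℝ) ^ (θ * (1 - α)))⁻¹ * t ^ (1 - α) := by positivity
      have h2 : (D ξ)⁻¹ ≤ (A * ((2:ℝ) ^ (θ * (1 - α)))⁻¹ * t ^ (1 - α))⁻¹ :=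
        inv_anti₀ hlo2 hDlo'
      rw [one_div]
      calc (D ξ)⁻¹ ≤ (A * ((2:ℝ) ^ (θ * (1 - α)))⁻¹ * t ^ (1 - α))⁻¹ := h2
        _ = (2:ℝ) ^ (θ * (1 - α)) / A * (t ^ (1 - α))⁻¹ := by
            rw [mul_inv, mul_inv, inv_inv]
            field_simp
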